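/- Let n ≥ 2, x,y ∈ Bⁿ, and r = max{|x|,|y|}. Then (1/2) ρ_{Bⁿ}(x,y) ≤ k_{Bⁿ}(x,y) ≤ ((1+r)/2) ρ_{Bⁿ}(x,y). -/

import Mathlib

open Metric Set Real Filter

/-- Conformal-type distance: infimum of weighted lengths of C¹ curves in `D` joining `x` to `y`. -/
noncomputable def confDist {E : Type*} [NormedAddCommGroup E] [NormedSpace ℝ E]
    (ρ : E → ℝ) (D : Set E) (x y : E) : ℝ :=
  sInf { L : ℝ | ∃ γ : ℝ → E, ContDiffOn ℝ 1 γ (Icc 0 1) ∧ γ 0 = x ∧ γ 1 = y ∧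
    (∀ t ∈ Icc (0:ℝ) 1, γ t ∈ D) ∧
    L = ∫ t in (0:ℝ)..1, ρ (γ t) * ‖derivWithin γ (Icc 0 1) t‖ }

/-- Quasihyperbolic distance in `D`, with density `1 / d(z, ∂D)`. -/
noncomputable def qhDist {E : Type*} [NormedAddCommGroup E] [NormedSpace ℝ E]
    (D : Set E) (x y : E) : ℝ :=
  confDist (fun z => (infDist z (frontier D))⁻¹) D x y

/-- Hyperbolic distance in the unit ball, with density `2 / (1 - |z|²)`. -/
noncomputable def hypDist {E : Type*} [NormedAddCommGroup E] [NormedSpace ℝ E]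
    (x y : E) : ℝ :=
  confDist (fun z => 2 / (1 - ‖z‖ ^ 2)) (ball 0 1) x y

section General
variable {E : Type*} [NormedAddCommGroup E] [NormedSpace ℝ E]

/-- The set of lengths of admissible curves. -/
def curveSet (ρ : E → ℝ) (D : Set E) (x y : E) : Set ℝ :=
  { L : ℝ | ∃ γ : ℝ → E, ContDiffOn ℝ 1 γ (Icc 0 1) ∧ γ 0 = x ∧ γ 1 = y ∧
    (∀ t ∈ Icc (0:ℝ) 1, γ t ∈ D) ∧
    L = ∫ t in (0:ℝ)..1, ρ (γ t) * ‖derivWithin γ (Icc 0 1) t‖ }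

lemma confDist_eq (ρ : E → ℝ) (D : Set E) (x y : E) :
    confDist ρ D x y = sInf (curveSet ρ D x y) := rfl

lemma curveSet_nonneg {ρ : E → ℝ} {D : Set E} {x y : E} (hρ : ∀ z ∈ D, 0 ≤ ρ z) :
    ∀ L ∈ curveSet ρ D x y, 0 ≤ L := by
  rintro L ⟨γ, hγ, h0, h1, hmem, rfl⟩
  apply intervalIntegral.integral_nonneg zero_le_one
  intro t ht
  exact mul_nonneg (hρ _ (hmem t ht)) (norm_nonneg _)

lemma curveSet_bddBelow {ρ : E → ℝ} {D : Set E} {x y : E} (hρ : ∀ z ∈ D, 0 ≤ ρ z) :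
    BddBelow (curveSet ρ D x y) :=
  ⟨0, fun _ hL => curveSet_nonneg hρ _ hL⟩

lemma curveSet_nonempty {ρ : E → ℝ} {D : Set E} {x y : E}
    (hseg : ∀ t ∈ Icc (0:ℝ) 1, x + t • (y - x) ∈ D) :
    (curveSet ρ D x y).Nonempty := by
  refine ⟨_, fun t => x + t • (y - x), ?_, by simp, by simp, hseg, rfl⟩
  exact (contDiff_const.add (contDiff_id.smul contDiff_const)).contDiffOn

lemma confDist_nonneg' {ρ : E → ℝ} {D : Set E} {x y : E} (hρ : ∀ z ∈ D, 0 ≤ ρ z)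
    (hseg : ∀ t ∈ Icc (0:ℝ) 1, x + t • (y - x) ∈ D) :
    0 ≤ confDist ρ D x y :=
  le_csInf (curveSet_nonempty hseg) (fun _ hL => curveSet_nonneg hρ _ hL)

/-- Transport lemma: a `C¹` self-map of `D` fixing `x, y` and contracting the weighted
metric up to a factor `c` compares the two conformal distances. -/
lemma confDist_le_mul_of_curve {ρ₁ ρ₂ : E → ℝ} {D : Set E} {x y : E} {c : ℝ} {f : E → E}
    (hρ₂ : ContinuousOn ρ₂ D) (hρ₁ : ContinuousOn ρ₁ D)
    (hρ₂0 : ∀ z ∈ D, 0 ≤ ρ₂ z)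
    (hf : ContDiff ℝ 1 f) (hfx : f x = x) (hfy : f y = y)
    (hfD : ∀ z ∈ D, f z ∈ D)
    (hcomp : ∀ z ∈ D, ∀ v : E, ρ₂ (f z) * ‖fderiv ℝ f z v‖ ≤ c * (ρ₁ z * ‖v‖))
    (L : ℝ) (hL : L ∈ curveSet ρ₁ D x y) :
    confDist ρ₂ D x y ≤ c * L := by
  rw [confDist_eq]
  obtain ⟨γ, hγ, h0, h1, hmem, rfl⟩ := hL
  set γ' : ℝ → E := f ∘ γ with hγ'def
  have hγ'smooth : ContDiffOn ℝ 1 γ' (Icc 0 1) := hf.comp_contDiffOn hγ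
  have hγ'mem : ∀ t ∈ Icc (0:ℝ) 1, γ' t ∈ D := fun t ht => hfD _ (hmem t ht)
  have hud : UniqueDiffOn ℝ (Icc (0:ℝ) 1) := uniqueDiffOn_Icc zero_lt_one
  have hderiv : ∀ t ∈ Icc (0:ℝ) 1,
      derivWithin γ' (Icc 0 1) t = fderiv ℝ f (γ t) (derivWithin γ (Icc 0 1) t) := by
    intro t ht
    have hd : HasDerivWithinAt γ (derivWithin γ (Icc 0 1) t) (Icc 0 1) t :=
      ((hγ.differentiableOn one_ne_zero) t ht).hasDerivWithinAt
    have hdf : HasFDerivAt f (fderiv ℝ f (γ t)) (γ t) :=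
      (hf.differentiable one_ne_zero _).hasFDerivAt
    exact (hdf.comp_hasDerivWithinAt t hd).derivWithin (hud t ht)
  have hcontd : ContinuousOn (fun t => ρ₁ (γ t) * ‖derivWithin γ (Icc 0 1) t‖) (Icc 0 1) :=
    (hρ₁.comp (hγ.continuousOn) (fun t ht => hmem t ht)).mul
      (hγ.continuousOn_derivWithin hud le_rfl).norm
  have hcontd' : ContinuousOn (fun t => ρ₂ (γ' t) * ‖derivWithin γ' (Icc 0 1) t‖) (Icc 0 1) :=
    (hρ₂.comp (hγ'smooth.continuousOn) (fun t ht => hγ'mem t ht)).mul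
      (hγ'smooth.continuousOn_derivWithin hud le_rfl).norm
  have hint : IntervalIntegrable (fun t => ρ₁ (γ t) * ‖derivWithin γ (Icc 0 1) t‖)
      MeasureTheory.volume 0 1 := (hcontd.mono (by rw [uIcc_of_le zero_le_one])).intervalIntegrable
  have hint' : IntervalIntegrable (fun t => ρ₂ (γ' t) * ‖derivWithin γ' (Icc 0 1) t‖)
      MeasureTheory.volume 0 1 := (hcontd'.mono (by rw [uIcc_of_le zero_le_one])).intervalIntegrable
  have hmemS : (∫ t in (0:ℝ)..1, ρ₂ (γ' t) * ‖derivWithin γ' (Icc 0 1) t‖) ∈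
      curveSet ρ₂ D x y :=
    ⟨γ', hγ'smooth, by simp [hγ'def, h0, hfx], by simp [hγ'def, h1, hfy], hγ'mem, rfl⟩
  refine le_trans (csInf_le (curveSet_bddBelow hρ₂0) hmemS) ?_
  rw [← intervalIntegral.integral_const_mul]
  apply intervalIntegral.integral_mono_on zero_le_one hint' (hint.const_mul c)
  intro t ht
  have := hcomp (γ t) (hmem t ht) (derivWithin γ (Icc 0 1) t)
  rw [hderiv t ht]
  exact this

lemma confDist_le_mul {ρ₁ ρ₂ : E → ℝ} {D : Set E} {x y : E} {c : ℝ} {f : E → E}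
    (hρ₂ : ContinuousOn ρ₂ D) (hρ₁ : ContinuousOn ρ₁ D)
    (hρ₂0 : ∀ z ∈ D, 0 ≤ ρ₂ z)
    (hf : ContDiff ℝ 1 f) (hfx : f x = x) (hfy : f y = y)
    (hfD : ∀ z ∈ D, f z ∈ D)
    (hcomp : ∀ z ∈ D, ∀ v : E, ρ₂ (f z) * ‖fderiv ℝ f z v‖ ≤ c * (ρ₁ z * ‖v‖))
    (hc : 0 < c)
    (hseg : ∀ t ∈ Icc (0:ℝ) 1, x + t • (y - x) ∈ D) :
    confDist ρ₂ D x y ≤ c * confDist ρ₁ D x y := by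
  rw [confDist_eq ρ₁, mul_comm, ← div_le_iff₀ hc]
  apply le_csInf (curveSet_nonempty hseg)
  intro L hL
  rw [div_le_iff₀ hc, mul_comm]
  exact confDist_le_mul_of_curve hρ₂ hρ₁ hρ₂0 hf hfx hfy hfD hcomp L hL

end General

section Phi
open intervalIntegral

variable {r0 e : ℝ}

/-- A continuous bump profile: `1` on `(-∞, r0]`, `0` on `[r0+e, ∞)`. -/
noncomputable def psiF (r0 e : ℝ) : ℝ → ℝ := fun t => min 1 (max ((r0 + e - t) / e) 0)

/-- The `C¹` cutoff function: identity on `(-∞, r0]`, bounded by `r0 + e`. -/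
noncomputable def phiF (r0 e : ℝ) : ℝ → ℝ := fun s => ∫ t in (0:ℝ)..s, psiF r0 e t

lemma psiF_cont : Continuous (psiF r0 e) :=
  continuous_const.min (((continuous_const.sub continuous_id).div_const e).max continuous_const)

lemma psiF_nonneg (t : ℝ) : 0 ≤ psiF r0 e t := le_min zero_le_one (le_max_right _ _)
lemma psiF_le_one (t : ℝ) : psiF r0 e t ≤ 1 := min_le_left _ _

lemma psiF_eq_one (he : 0 < e) {t : ℝ} (ht : t ≤ r0) : psiF r0 e t = 1 := by
  have : (1:ℝ) ≤ (r0 + e - t) / e := (le_div_iff₀ he).2 (by linarith)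
  simp [psiF, min_eq_left (this.trans (le_max_left _ _))]

lemma psiF_eq_zero (he : 0 < e) {t : ℝ} (ht : r0 + e ≤ t) : psiF r0 e t = 0 := by
  have h1 : (r0 + e - t) / e ≤ 0 := div_nonpos_of_nonpos_of_nonneg (by linarith) he.le
  have : max ((r0 + e - t) / e) 0 = 0 := max_eq_right h1
  simp [psiF, this]

lemma phiF_eq_self (he : 0 < e) (hr0 : 0 ≤ r0) {s : ℝ} (hs : s ≤ r0) : phiF r0 e s = s := by
  have : ∀ t ∈ uIcc (0:ℝ) s, psiF r0 e t = 1 := by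
    intro t ht
    apply psiF_eq_one he
    rcases le_total 0 s with h | h
    · rw [uIcc_of_le h] at ht; exact ht.2.trans hs
    · rw [uIcc_of_ge h] at ht; exact ht.2.trans hr0
  rw [phiF, integral_congr this]
  simp

lemma phiF_hasDerivAt (s : ℝ) : HasDerivAt (phiF r0 e) (psiF r0 e s) s :=
  (psiF_cont.integral_hasStrictDerivAt 0 s).hasDerivAt

lemma phiF_contDiff : ContDiff ℝ 1 (phiF r0 e) := by
  rw [contDiff_one_iff_deriv]
  refine ⟨fun s => (phiF_hasDerivAt s).differentiableAt, ?_⟩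
  have : deriv (phiF r0 e) = psiF r0 e := funext fun s => (phiF_hasDerivAt s).deriv
  rw [this]; exact psiF_cont

lemma phiF_nonneg {s : ℝ} (hs : 0 ≤ s) : 0 ≤ phiF r0 e s :=
  integral_nonneg hs (fun t _ => psiF_nonneg t)

lemma phiF_le_self {s : ℝ} (hs : 0 ≤ s) : phiF r0 e s ≤ s := by
  have h := integral_mono_on (f := psiF r0 e) (g := fun _ => (1:ℝ))
    (μ := MeasureTheory.volume) (a := 0) (b := s) hs
    (psiF_cont.intervalIntegrable 0 s) (_root_.intervalIntegrable_const (c := (1:ℝ)))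
    (fun t _ => psiF_le_one t)
  simpa [phiF] using h

lemma phiF_lip (a b : ℝ) : |phiF r0 e a - phiF r0 e b| ≤ |a - b| := by
  have h1 : phiF r0 e a - phiF r0 e b = ∫ t in b..a, psiF r0 e t := by
    rw [phiF, phiF, ← integral_interval_sub_left (psiF_cont.intervalIntegrable 0 a)
      (psiF_cont.intervalIntegrable 0 b)]
  rw [h1]
  have := intervalIntegral.norm_integral_le_of_norm_le_const (C := 1)
    (f := psiF r0 e) (a := b) (b := a) ?_
  · simpa [Real.norm_eq_abs, abs_sub_comm a b] using this
  · intro t _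
    rw [Real.norm_eq_abs, abs_of_nonneg (psiF_nonneg t)]
    exact psiF_le_one t

lemma phiF_le_bound (he : 0 < e) (hr0 : 0 ≤ r0) (s : ℝ) : phiF r0 e s ≤ r0 + e := by
  rcases le_total s (r0 + e) with h | h
  · rcases le_total s 0 with h0 | h0
    · rw [show phiF r0 e s = s from phiF_eq_self he hr0 (h0.trans hr0)]; linarith
    · exact (phiF_le_self h0).trans h
  · have hsplit : phiF r0 e (r0 + e) + (∫ t in (r0+e)..s, psiF r0 e t) = phiF r0 e s :=
      integral_add_adjacent_intervals (psiF_cont.intervalIntegrable 0 (r0+e))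
        (psiF_cont.intervalIntegrable (r0+e) s)
    have hzero : (∫ t in (r0+e)..s, psiF r0 e t) = 0 := by
      have : ∀ t ∈ uIcc (r0+e) s, psiF r0 e t = 0 := by
        intro t ht
        rw [uIcc_of_le h] at ht
        exact psiF_eq_zero he ht.1
      rw [integral_congr this]; simp
    rw [← hsplit, hzero, add_zero]
    exact phiF_le_self (by linarith : (0:ℝ) ≤ r0 + e)

end Phi

section F
variable {E : Type*} [NormedAddCommGroup E] [InnerProductSpace ℝ E]
variable (φ : ℝ → ℝ)

/-- The radial map `z ↦ (φ(‖z‖)/‖z‖) z`. -/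
noncomputable def radF (φ : ℝ → ℝ) : E → E := fun z => (φ ‖z‖ / ‖z‖) • z

lemma radF_norm (hnn : ∀ s, 0 ≤ s → 0 ≤ φ s) (hzero : φ 0 = 0) (z : E) :
    ‖radF φ z‖ = φ ‖z‖ := by
  rcases eq_or_ne z 0 with rfl | hz
  · simp [radF, hzero]
  · have h : ‖z‖ ≠ 0 := norm_ne_zero_iff.2 hz
    rw [radF, norm_smul, Real.norm_eq_abs, abs_div, abs_of_nonneg (hnn _ (norm_nonneg z)),
      abs_of_nonneg (norm_nonneg z), div_mul_cancel₀ _ h]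

lemma radF_id {ρ0 : ℝ} (hid : ∀ s, s ≤ ρ0 → φ s = s) {z : E} (hz : ‖z‖ ≤ ρ0) :
    radF φ z = z := by
  rcases eq_or_ne z 0 with rfl | hz0
  · simp [radF]
  · have h : ‖z‖ ≠ 0 := norm_ne_zero_iff.2 hz0
    rw [radF, hid _ hz, div_self h, one_smul]

lemma radF_contDiff {ρ0 : ℝ} (hρ0 : 0 < ρ0) (hφ : ContDiff ℝ 1 φ)
    (hid : ∀ s, s ≤ ρ0 → φ s = s) : ContDiff ℝ 1 (radF φ : E → E) := by
  rw [contDiff_iff_contDiffAt]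
  intro z
  rcases lt_or_ge ‖z‖ ρ0 with hz | hz
  · have hev : (radF φ : E → E) =ᶠ[nhds z] id := by
      have hzmem : z ∈ ball (0:E) ρ0 := by simpa [mem_ball, dist_zero_right] using hz
      filter_upwards [IsOpen.mem_nhds isOpen_ball hzmem] with w hw
      exact radF_id φ hid (le_of_lt (by simpa [mem_ball, dist_zero_right] using hw))
    exact contDiffAt_id.congr_of_eventuallyEq hev
  · have hz0 : z ≠ 0 := by
      intro h; rw [h] at hz; simp at hz; linarith
    have hnorm : ContDiffAt ℝ 1 (fun w : E => ‖w‖) z := contDiffAt_norm ℝ hz0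
    exact ((hφ.contDiffAt.comp z hnorm).div hnorm (norm_ne_zero_iff.2 hz0)).smul contDiffAt_id

lemma radF_lipschitz (hnn : ∀ s, 0 ≤ s → 0 ≤ φ s) (hzero : φ 0 = 0)
    (hle : ∀ s, 0 ≤ s → φ s ≤ s) (hlip : ∀ a b, |φ a - φ b| ≤ |a - b|) :
    LipschitzWith 1 (radF φ : E → E) := by
  apply LipschitzWith.of_dist_le_mul
  intro a b
  rw [NNReal.coe_one, one_mul, dist_eq_norm, dist_eq_norm]
  rcases eq_or_ne a 0 with rfl | ha
  · rw [show radF φ (0:E) = 0 by simp [radF], zero_sub, norm_neg, zero_sub, norm_neg,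
      radF_norm φ hnn hzero]
    exact hle _ (norm_nonneg b)
  rcases eq_or_ne b 0 with rfl | hb
  · rw [show radF φ (0:E) = 0 by simp [radF], sub_zero, sub_zero, radF_norm φ hnn hzero]
    exact hle _ (norm_nonneg a)
  · set α := ‖a‖ with hα
    set β := ‖b‖ with hβ
    have hα0 : 0 < α := norm_pos_iff.2 ha
    have hβ0 : 0 < β := norm_pos_iff.2 hb
    set p := φ α with hp
    set q := φ β with hq
    have hp0 : 0 ≤ p := hnn _ hα0.le
    have hq0 : 0 ≤ q := hnn _ hβ0.le
    have hpα : p ≤ α := hle _ hα0.le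
    have hqβ : q ≤ β := hle _ hβ0.le
    have hsq : (p - q)^2 ≤ (α - β)^2 := by
      have h1 := hlip α β
      have := mul_self_le_mul_self (abs_nonneg (p - q)) h1
      simpa [← sq, sq_abs] using this
    have hc : inner ℝ a b ≤ α * β := real_inner_le_norm a b
    have key : ‖radF φ a - radF φ b‖^2 ≤ ‖a - b‖^2 := by
      have e1 : ‖radF φ a - radF φ b‖^2 =
          p^2 + q^2 - 2 * ((p/α) * (q/β) * inner ℝ a b) := by
        rw [norm_sub_sq_real, radF_norm φ hnn hzero, radF_norm φ hnn hzero]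
        rw [radF, radF, real_inner_smul_left, real_inner_smul_right]
        simp only [hp, hq, hα, hβ]
        ring_nf
      have e2 : ‖a - b‖^2 = α^2 + β^2 - 2 * inner ℝ a b := by
        rw [norm_sub_sq_real]; ring
      rw [e1, e2]
      set c : ℝ := inner ℝ a b with hcdef
      have hk : (p/α) * (q/β) ≤ 1 := by
        have := mul_le_mul hpα hqβ hq0 hα0.le
        rw [div_mul_div_comm]
        exact div_le_one_of_le₀ this (by positivity)
      have hkeq : (p/α) * (q/β) * (α * β) = p * q := by
        field_simp
      nlinarith [mul_nonneg (sub_nonneg.2 hc) (sub_nonneg.2 hk), hsq]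
    nlinarith [norm_nonneg (radF φ a - radF φ b), norm_nonneg (a - b), key]

end F
section Main
variable {E : Type*} [NormedAddCommGroup E] [InnerProductSpace ℝ E] [Nontrivial E]

lemma infDist_sphere_one {z : E} (hz : ‖z‖ ≤ 1) : infDist z (sphere (0:E) 1) = 1 - ‖z‖ := by
  have hne : (sphere (0:E) 1).Nonempty := by
    obtain ⟨w, hw⟩ := exists_norm_eq E zero_le_one
    exact ⟨w, by simpa [mem_sphere_iff_norm] using hw⟩
  apply le_antisymm
  · rcases eq_or_ne z 0 with rfl | hz0
    · obtain ⟨w, hw⟩ := hne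
      have h1 := infDist_le_dist_of_mem (x := (0:E)) hw
      have h2 : dist (0:E) w = 1 := by
        rw [mem_sphere_iff_norm, sub_zero] at hw
        rw [dist_comm, dist_zero_right, hw]
      simpa [h2] using h1
    · have hzn : ‖z‖ ≠ 0 := norm_ne_zero_iff.2 hz0
      have hzpos : 0 < ‖z‖ := norm_pos_iff.2 hz0
      have hwmem : (‖z‖⁻¹ • z) ∈ sphere (0:E) 1 := by
        rw [mem_sphere_iff_norm, sub_zero, norm_smul, Real.norm_eq_abs,
          abs_of_nonneg (inv_nonneg.2 (norm_nonneg z)), inv_mul_cancel₀ hzn]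
      have h1 := infDist_le_dist_of_mem (x := z) hwmem
      have h2 : dist z (‖z‖⁻¹ • z) = 1 - ‖z‖ := by
        have e1 : z - ‖z‖⁻¹ • z = (1 - ‖z‖⁻¹) • z := by rw [sub_smul, one_smul]
        rw [dist_eq_norm, e1, norm_smul, Real.norm_eq_abs]
        have e2 : |1 - ‖z‖⁻¹| * ‖z‖ = |(1 - ‖z‖⁻¹) * ‖z‖| := by
          rw [abs_mul, abs_of_nonneg (norm_nonneg z)]
        have e3 : (1 - ‖z‖⁻¹) * ‖z‖ = ‖z‖ - 1 := by
          field_simp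
        rw [e2, e3, abs_of_nonpos (by linarith)]
        ring
      rw [h2] at h1; exact h1
  · rw [infDist_eq_iInf]
    haveI : Nonempty ↥(sphere (0:E) 1) := hne.to_subtype
    apply le_ciInf
    rintro ⟨w, hw⟩
    rw [mem_sphere_iff_norm, sub_zero] at hw
    have : ‖w‖ - ‖z‖ ≤ ‖w - z‖ := norm_sub_norm_le w z
    rw [dist_eq_norm, ← norm_neg (z - w), neg_sub]
    linarith [hw ▸ this]

lemma comparison_general {x y : E}
    (hx : x ∈ ball (0 : E) 1) (hy : y ∈ ball (0 : E) 1) :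
    (1 / 2) * hypDist x y ≤ qhDist (ball (0 : E) 1) x y ∧
    qhDist (ball (0 : E) 1) x y ≤ ((1 + max ‖x‖ ‖y‖) / 2) * hypDist x y := by
  set D : Set E := ball (0 : E) 1 with hDdef
  have hxn : ‖x‖ < 1 := mem_ball_zero_iff.1 hx
  have hyn : ‖y‖ < 1 := mem_ball_zero_iff.1 hy
  set r : ℝ := max ‖x‖ ‖y‖ with hrdef
  have hr1 : r < 1 := max_lt hxn hyn
  have hr0 : 0 ≤ r := le_trans (norm_nonneg x) (le_max_left _ _)
  have hfr : frontier D = sphere (0:E) 1 := frontier_ball 0 one_ne_zero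
  have hinf : ∀ z ∈ D, infDist z (frontier D) = 1 - ‖z‖ := by
    intro z hz
    rw [hfr]
    exact infDist_sphere_one (le_of_lt (mem_ball_zero_iff.1 hz))
  set ρq : E → ℝ := fun z => (infDist z (frontier D))⁻¹ with hρqdef
  set ρh : E → ℝ := fun z => 2 / (1 - ‖z‖ ^ 2) with hρhdef
  have hone : ∀ z ∈ D, 0 < 1 - ‖z‖ := by
    intro z hz; have := mem_ball_zero_iff.1 hz; linarith
  have honesq : ∀ z ∈ D, 0 < 1 - ‖z‖ ^ 2 := by
    intro z hz
    have h1 := mem_ball_zero_iff.1 hz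
    nlinarith [norm_nonneg z]
  have hρq_cont : ContinuousOn ρq D := by
    apply ContinuousOn.inv₀ (continuous_infDist_pt _).continuousOn
    intro z hz
    rw [hinf z hz]
    exact ne_of_gt (hone z hz)
  have hρh_cont : ContinuousOn ρh D := by
    apply ContinuousOn.div continuousOn_const
      ((continuous_const.sub (continuous_norm.pow 2)).continuousOn)
    intro z hz
    exact ne_of_gt (honesq z hz)
  have hρq0 : ∀ z ∈ D, 0 ≤ ρq z := fun z _ => inv_nonneg.2 infDist_nonneg
  have hρh0 : ∀ z ∈ D, 0 ≤ ρh z := fun z hz => div_nonneg (by norm_num) (honesq z hz).le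
  have hseg : ∀ t ∈ Icc (0:ℝ) 1, x + t • (y - x) ∈ D := by
    intro t ht
    rw [mem_ball_zero_iff]
    have e1 : x + t • (y - x) = (1 - t) • x + t • y := by
      rw [smul_sub, sub_smul, one_smul]; abel
    rw [e1]
    set m : ℝ := min (1 - ‖x‖) (1 - ‖y‖) with hmdef
    have hm : 0 < m := lt_min (by linarith) (by linarith)
    have h1 : (1-t) * m ≤ (1-t) * (1-‖x‖) :=
      mul_le_mul_of_nonneg_left (min_le_left _ _) (by linarith [ht.2])
    have h2 : t * m ≤ t * (1-‖y‖) := mul_le_mul_of_nonneg_left (min_le_right _ _) ht.1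
    calc ‖(1 - t) • x + t • y‖ ≤ ‖(1 - t) • x‖ + ‖t • y‖ := norm_add_le _ _
      _ = (1 - t) * ‖x‖ + t * ‖y‖ := by
          rw [norm_smul, norm_smul, Real.norm_eq_abs, Real.norm_eq_abs,
            abs_of_nonneg (by linarith [ht.2] : (0:ℝ) ≤ 1 - t), abs_of_nonneg ht.1]
      _ < 1 := by nlinarith
  have hhyp_nonneg : 0 ≤ hypDist x y := confDist_nonneg' hρh0 hseg
  constructor
  · -- lower bound
    have hlow : confDist ρh D x y ≤ 2 * confDist ρq D x y := by
      apply confDist_le_mul (f := (id : E → E)) hρh_cont hρq_cont hρh0 contDiff_id rfl rfl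
        (fun z hz => hz) ?_ two_pos hseg
      intro z hz v
      have h1 := hone z hz
      have h2 := honesq z hz
      rw [fderiv_id]
      simp only [ContinuousLinearMap.coe_id', id_eq]
      rw [hρhdef, hρqdef]
      simp only [id_eq]
      rw [hinf z hz]
      have hdens : 2 / (1 - ‖z‖ ^ 2) ≤ 2 * (1 - ‖z‖)⁻¹ := by
        rw [inv_eq_one_div, mul_div_assoc', mul_one, div_le_div_iff₀ h2 h1]
        nlinarith [norm_nonneg z, mem_ball_zero_iff.1 hz]
      calc 2 / (1 - ‖z‖ ^ 2) * ‖v‖ ≤ (2 * (1 - ‖z‖)⁻¹) * ‖v‖ :=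
            mul_le_mul_of_nonneg_right hdens (norm_nonneg v)
        _ = 2 * ((1 - ‖z‖)⁻¹ * ‖v‖) := by ring
    have e1 : hypDist x y = confDist ρh D x y := rfl
    have e2 : qhDist D x y = confDist ρq D x y := rfl
    rw [e1, e2]
    linarith
  · -- upper bound
    have key : ∀ e : ℝ, 0 < e → r + 2*e < 1 →
        qhDist D x y ≤ ((1 + r + 2*e)/2) * hypDist x y := by
      intro e he hre
      set ρ0 : ℝ := r + e with hρ0def
      have hρ0pos : 0 < ρ0 := by rw [hρ0def]; linarith
      set f : E → E := radF (phiF ρ0 e) with hfdef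
      have hid : ∀ s, s ≤ ρ0 → phiF ρ0 e s = s := fun s hs => phiF_eq_self he hρ0pos.le hs
      have hzero : phiF ρ0 e 0 = 0 := hid 0 hρ0pos.le
      have hnn : ∀ s, 0 ≤ s → 0 ≤ phiF ρ0 e s := fun s hs => phiF_nonneg hs
      have hles : ∀ s, 0 ≤ s → phiF ρ0 e s ≤ s := fun s hs => phiF_le_self hs
      have hfnorm : ∀ z : E, ‖f z‖ = phiF ρ0 e ‖z‖ := radF_norm _ hnn hzero
      have hflip : LipschitzWith 1 f := radF_lipschitz _ hnn hzero hles phiF_lip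
      have hfsmooth : ContDiff ℝ 1 f := radF_contDiff _ hρ0pos phiF_contDiff hid
      have hfD : ∀ z ∈ D, f z ∈ D := by
        intro z hz
        rw [mem_ball_zero_iff] at hz ⊢
        rw [hfnorm]
        exact lt_of_le_of_lt (hles _ (norm_nonneg z)) hz
      have hfx : f x = x := radF_id _ hid (by rw [hρ0def]; linarith [le_max_left ‖x‖ ‖y‖])
      have hfy : f y = y := radF_id _ hid (by rw [hρ0def]; linarith [le_max_right ‖x‖ ‖y‖])
      have e2 : qhDist D x y = confDist ρq D x y := rfl
      have e1 : hypDist x y = confDist ρh D x y := rfl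
      rw [e1, e2]
      apply confDist_le_mul hρq_cont hρh_cont hρq0 hfsmooth hfx hfy hfD ?_ (by linarith) hseg
      intro z hz v
      have hz1 : ‖z‖ < 1 := mem_ball_zero_iff.1 hz
      have hfzD : f z ∈ D := hfD z hz
      have hu_le_z : ‖f z‖ ≤ ‖z‖ := by rw [hfnorm]; exact hles _ (norm_nonneg z)
      have hu_le_r : ‖f z‖ ≤ r + 2*e := by
        rw [hfnorm]
        have := phiF_le_bound he hρ0pos.le ‖z‖
        rw [hρ0def] at this; linarith
      have h1u : 0 < 1 - ‖f z‖ := by linarith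
      have h1z : 0 < 1 - ‖z‖ ^ 2 := honesq z hz
      have hDv : ‖fderiv ℝ f z v‖ ≤ ‖v‖ := by
        calc ‖fderiv ℝ f z v‖ ≤ ‖fderiv ℝ f z‖ * ‖v‖ := ContinuousLinearMap.le_opNorm _ _
          _ ≤ 1 * ‖v‖ := mul_le_mul_of_nonneg_right
              (by simpa using norm_fderiv_le_of_lipschitz ℝ hflip) (norm_nonneg v)
          _ = ‖v‖ := one_mul _
      rw [hρqdef, hρhdef]
      simp only []
      rw [hinf _ hfzD]
      have hdens : (1 - ‖f z‖)⁻¹ ≤ (1 + r + 2*e)/2 * (2/(1 - ‖z‖^2)) := by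
        have hz2 : ‖f z‖^2 ≤ ‖z‖^2 := by nlinarith [norm_nonneg (f z)]
        have heq : (1 + r + 2*e)/2 * (2/(1 - ‖z‖^2)) = (1 + r + 2*e)/(1 - ‖z‖^2) := by
          field_simp
        rw [heq, inv_eq_one_div, div_le_div_iff₀ h1u h1z]
        nlinarith [mul_nonneg h1u.le (sub_nonneg.2 hu_le_r)]
      calc (1 - ‖f z‖)⁻¹ * ‖fderiv ℝ f z v‖ ≤ (1 - ‖f z‖)⁻¹ * ‖v‖ :=
            mul_le_mul_of_nonneg_left hDv (inv_nonneg.2 h1u.le)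
        _ ≤ ((1 + r + 2*e)/2 * (2/(1 - ‖z‖^2))) * ‖v‖ :=
            mul_le_mul_of_nonneg_right hdens (norm_nonneg v)
        _ = (1 + r + 2*e)/2 * (2/(1 - ‖z‖^2) * ‖v‖) := by ring
    by_contra hcon
    push_neg at hcon
    set h : ℝ := hypDist x y with hhdef
    set δ : ℝ := qhDist D x y - ((1 + r)/2) * h with hδdef
    have hδpos : 0 < δ := by rw [hδdef]; linarith
    set e : ℝ := min ((1 - r)/4) (δ/(2*(h+1))) with hedef
    have he : 0 < e := lt_min (by linarith) (by positivity)
    have hre : r + 2*e < 1 := by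
      have := min_le_left ((1 - r)/4) (δ/(2*(h+1)))
      rw [← hedef] at this
      linarith
    have hkey := key e he hre
    have heh : e * h ≤ (δ/(2*(h+1))) * h :=
      mul_le_mul_of_nonneg_right (min_le_right _ _) hhyp_nonneg
    have hq : 0 < δ/(2*(h+1)) := by positivity
    have hqmul : δ/(2*(h+1)) * (2*(h+1)) = δ :=
      div_mul_cancel₀ _ (by positivity)
    have hfinal : (δ/(2*(h+1))) * h < δ := by nlinarith
    have : ((1 + r + 2*e)/2) * h = ((1 + r)/2) * h + e * h := by ring
    rw [this] at hkey
    linarith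
end Main

/-- For `x, y` in the unit ball and `r = max(|x|,|y|)`,
`ρ(x,y)/2 ≤ k(x,y) ≤ (1+r) ρ(x,y) / 2`. -/
theorem qhDist_hypDist_comparison {n : ℕ} (hn : 2 ≤ n)
    (x y : EuclideanSpace ℝ (Fin n))
    (hx : x ∈ ball (0 : EuclideanSpace ℝ (Fin n)) 1)
    (hy : y ∈ ball (0 : EuclideanSpace ℝ (Fin n)) 1) :
    (1 / 2) * hypDist x y ≤ qhDist (ball (0 : EuclideanSpace ℝ (Fin n)) 1) x y ∧
    qhDist (ball (0 : EuclideanSpace ℝ (Fin n)) 1) x y ≤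
      ((1 + max ‖x‖ ‖y‖) / 2) * hypDist x y := by
  haveI : Nontrivial (EuclideanSpace ℝ (Fin n)) := by
    refine ⟨EuclideanSpace.single (⟨0, by omega⟩ : Fin n) (1:ℝ), 0, ?_⟩
    intro hcontra
    have := congrArg (fun v => v (⟨0, by omega⟩ : Fin n)) hcontra
    simp [EuclideanSpace.single_apply] at this
  exact comparison_general hx hy
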